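/- In two-way 2-bootstrap percolation on T_L^d (d ≥ 2, L even, L ≥ 6): if a 2-dimensional hyper-square HS of the tiling (of even parity) has, in some even-round configuration C_t, two occupied outer neighbors (in distinct dimensions), then HS is occupied in C_{t+2}; here a hyper-square of even parity is occupied in an even round iff its even-part is fully black, and one of odd parity iff its odd-part is fully black. -/

import Mathlib

open scoped Classical ENNReal
open MeasureTheory Filter

/-- Vertices of the `d`-dimensional torus with side length `L`. -/
abbrev TorusV (d L : ℕ) := Fin d → ZMod L

/-- The `d`-dimensional torus graph `T_L^d`: two nodes are adjacent iff they differ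
by `±1 (mod L)` in exactly one coordinate. -/
def torusGraph (d L : ℕ) : SimpleGraph (TorusV d L) where
  Adj v u := v ≠ u ∧ ∃ j, (u j = v j + 1 ∨ u j = v j - 1) ∧ ∀ k, k ≠ j → u k = v k
  symm := by
    constructor
    rintro v u ⟨hne, j, hj, hk⟩
    refine ⟨hne.symm, j, ?_, fun k hkj => (hk k hkj).symm⟩
    rcases hj with h | h
    · right; rw [h]; ring
    · left; rw [h]; ring
  loopless := by constructor; rintro v ⟨hne, -⟩; exact hne rfl

/-- One round of two-way `r`-bootstrap percolation on a finite graph: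
a node is black in the next round iff it has at least `r` black neighbors. -/
noncomputable def gStep {V : Type*} [Fintype V] (G : SimpleGraph V) (r : ℕ)
    (C : V → Bool) : V → Bool :=
  fun v => decide (r ≤ (Finset.univ.filter (fun u => G.Adj v u ∧ C u = true)).card)

/-- One round of (ordinary) `r`-bootstrap percolation: black nodes stay black, and a white
node becomes black iff it has at least `r` black neighbors. -/
noncomputable def bpStep {V : Type*} [Fintype V] (G : SimpleGraph V) (r : ℕ)
    (C : V → Bool) : V → Bool :=
  fun v => C v || decide (r ≤ (Finset.univ.filter (fun u => G.Adj v u ∧ C u = true)).card)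

/-- One round of the majority model: each node adopts the most frequent color among its
neighbors, keeping its own color in case of a tie. -/
noncomputable def majStep {V : Type*} [Fintype V] (G : SimpleGraph V)
    (C : V → Bool) : V → Bool :=
  fun v =>
    let b := (Finset.univ.filter (fun u => G.Adj v u ∧ C u = true)).card
    let w := (Finset.univ.filter (fun u => G.Adj v u ∧ C u = false)).card
    if w < b then true else if b < w then false else C v

/-- `S` is an `(r,c)`-robust set in two-way `r`-BP: whenever all nodes of `S` have color `c`,
they keep color `c` in all subsequent configurations. (`true` = black, `false` = white.) -/
noncomputable def isRobust {V : Type*} [Fintype V] (G : SimpleGraph V) (r : ℕ) (c : Bool)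
    (S : Finset V) : Prop :=
  ∀ C : V → Bool, (∀ v ∈ S, C v = c) → ∀ t, ∀ v ∈ S, (gStep G r)^[t] C v = c

/-- `S` is a b-eternal set in two-way `r`-BP: whenever all nodes of `S` are black, every
subsequent configuration contains at least one black node. -/
noncomputable def isBEternal {V : Type*} [Fintype V] (G : SimpleGraph V) (r : ℕ)
    (S : Finset V) : Prop :=
  ∀ C : V → Bool, (∀ v ∈ S, C v = true) → ∀ t, ∃ v, (gStep G r)^[t] C v = true

/-- The node of a hyper-square at start `i` obtained by incrementing the coordinates in `S`. -/
def hsNode {d L : ℕ} (i : TorusV d L) (S : Finset (Fin d)) : TorusV d L :=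
  fun j => if j ∈ S then i j + 1 else i j

/-- The hyper-square with starting node `i` and coordinate set `J` (an `J.card`-dimensional
hyper-square). -/
noncomputable def hyperSquare {d L : ℕ} (i : TorusV d L) (J : Finset (Fin d)) :
    Finset (TorusV d L) :=
  J.powerset.image (hsNode i)

/-- The even-part of the hyper-square: nodes differing from the start in an even number of
coordinates. -/
noncomputable def evenPart {d L : ℕ} (i : TorusV d L) (J : Finset (Fin d)) :
    Finset (TorusV d L) :=
  (J.powerset.filter (fun S => Even S.card)).image (hsNode i)

/-- The odd-part of the hyper-square: nodes differing from the start in an odd number of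
coordinates. -/
noncomputable def oddPart {d L : ℕ} (i : TorusV d L) (J : Finset (Fin d)) :
    Finset (TorusV d L) :=
  (J.powerset.filter (fun S => Odd S.card)).image (hsNode i)

/-- The hyper-rectangle of size `l 0 × ⋯ × l (d-1)` starting at node `i`. -/
noncomputable def hyperRect {d L : ℕ} [NeZero L] (i : TorusV d L) (l : Fin d → ℕ) :
    Finset (TorusV d L) :=
  Finset.univ.filter (fun v => ∀ j, ∃ m : ℕ, m ≤ l j ∧ v j = i j + (m : ZMod L))

/-- The parity of a hyper-square of the tiling: parity of the sum of the last `d - r`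
coordinates of its starting node. -/
def tpar (d L r : ℕ) (i : TorusV d L) : ℕ :=
  (∑ j ∈ Finset.univ.filter (fun j : Fin d => r ≤ (j : ℕ)), (i j).val) % 2

/-- A hyper-square of the tiling (start `i`, coordinate set = first `r` coordinates) is
occupied: its even-part is fully black if its parity is even, and its odd-part is fully
black if its parity is odd. -/
noncomputable def occupiedHS (d L r : ℕ) (i : TorusV d L) (C : TorusV d L → Bool) : Prop :=
  if tpar d L r i = 0 then
    ∀ v ∈ evenPart i (Finset.univ.filter (fun j : Fin d => (j : ℕ) < r)), C v = true
  else
    ∀ v ∈ oddPart i (Finset.univ.filter (fun j : Fin d => (j : ℕ) < r)), C v = true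

/-- The Bernoulli measure on `Bool` with success (black) probability `p` (clamped to `1`). -/
noncomputable def bernoulliMeasure (p : ℝ≥0∞) : Measure Bool :=
  (PMF.bernoulli (min p 1).toNNReal (by
    rw [← ENNReal.coe_le_coe, ENNReal.coe_toNNReal
      (ne_top_of_le_ne_top ENNReal.one_ne_top (min_le_right _ _))]
    exact le_of_le_of_eq (min_le_right _ _) ENNReal.coe_one.symm)).toMeasure

/-- The product measure on configurations: each node is independently black with
probability `p`. -/
noncomputable def productMeasure (V : Type*) [Fintype V] (p : ℝ≥0∞) :
    Measure (V → Bool) :=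
  Measure.pi (fun _ : V => bernoulliMeasure p)

lemma twoNbrs {V : Type*} [Fintype V] [DecidableEq V] (G : SimpleGraph V) (C : V → Bool)
    (v u1 u2 : V) (h12 : u1 ≠ u2) (a1 : G.Adj v u1) (a2 : G.Adj v u2)
    (b1 : C u1 = true) (b2 : C u2 = true) : gStep G 2 C v = true := by
  unfold gStep
  rw [decide_eq_true_eq]
  calc 2 = ({u1, u2} : Finset V).card := (Finset.card_pair h12).symm
    _ ≤ _ := Finset.card_le_card (by
        intro x hx
        simp only [Finset.mem_insert, Finset.mem_singleton] at hx
        rcases hx with rfl | rfl <;> simp [a1, a2, b1, b2])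

lemma adj_update {d L : ℕ} [NeZero L] (hL : 6 ≤ L) (v : TorusV d L) (j : Fin d) (s : ZMod L)
    (hs : s = 1 ∨ s = -1) : (torusGraph d L).Adj v (Function.update v j (v j + s)) := by
  haveI : Fact (1 < L) := ⟨by omega⟩
  have hs0 : s ≠ 0 := by
    rcases hs with rfl | rfl
    · exact one_ne_zero
    · simpa using (one_ne_zero : (1 : ZMod L) ≠ 0)
  refine ⟨?_, j, ?_, fun k hk => Function.update_of_ne hk _ _⟩
  · intro h
    have := congrFun h j
    rw [Function.update_self] at this
    exact hs0 (by linear_combination -this)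
  · rcases hs with rfl | rfl
    · left; rw [Function.update_self]
    · right; rw [Function.update_self]; ring

lemma hsNode_update {d L : ℕ} (i : TorusV d L) (j : Fin d) (x : ZMod L)
    (S : Finset (Fin d)) (hj : j ∉ S) :
    hsNode (Function.update i j x) S = Function.update (hsNode i S) j x := by
  funext k
  by_cases hk : k = j
  · subst hk
    simp [hsNode, hj, Function.update_self]
  · simp [hsNode, Function.update_of_ne hk]

theorem stmt_17 (d L : ℕ) [NeZero L] (hd : 2 ≤ d) (hL : 6 ≤ L) (hLe : Even L)
    (i : TorusV d L) (hi : ∀ j : Fin d, (j : ℕ) < 2 → Odd (i j).val)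
    (hpar : tpar d L 2 i = 0)
    (j1 j2 : Fin d) (h1 : 2 ≤ (j1 : ℕ)) (h2 : 2 ≤ (j2 : ℕ)) (hj : j1 ≠ j2)
    (s1 s2 : ZMod L) (hs1 : s1 = 1 ∨ s1 = -1) (hs2 : s2 = 1 ∨ s2 = -1)
    (C : TorusV d L → Bool)
    (hocc1 : ∀ v ∈ oddPart (Function.update i j1 (i j1 + s1))
      (Finset.univ.filter (fun j : Fin d => (j : ℕ) < 2)), C v = true)
    (hocc2 : ∀ v ∈ oddPart (Function.update i j2 (i j2 + s2))
      (Finset.univ.filter (fun j : Fin d => (j : ℕ) < 2)), C v = true) :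
    ∀ v ∈ evenPart i (Finset.univ.filter (fun j : Fin d => (j : ℕ) < 2)),
      (gStep (torusGraph d L) 2)^[2] C v = true := by
  haveI : Fact (1 < L) := ⟨by omega⟩
  classical
  set J : Finset (Fin d) := Finset.univ.filter (fun j : Fin d => (j : ℕ) < 2) with hJ
  have hj0lt : 0 < d := by omega
  have hjAlt : 1 < d := by omega
  set j0 : Fin d := ⟨0, hj0lt⟩ with hj0def
  set jA : Fin d := ⟨1, hjAlt⟩ with hjAdef
  have hJeq : J = {j0, jA} := by
    ext k
    simp only [hJ, Finset.mem_filter, Finset.mem_univ, true_and, Finset.mem_insert,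
      Finset.mem_singleton]
    constructor
    · intro hk
      have : (k : ℕ) = 0 ∨ (k : ℕ) = 1 := by omega
      rcases this with h | h
      · left; exact Fin.ext h
      · right; exact Fin.ext h
    · rintro (rfl | rfl) <;> simp [hj0def, hjAdef]
  have hj0A : j0 ≠ jA := by intro h; exact absurd (congrArg Fin.val h) (by simp)
  have h1ne0 : j1 ≠ j0 := by intro h; rw [h] at h1; simp [hj0def, hjAdef] at h1
  have h1neA : j1 ≠ jA := by intro h; rw [h] at h1; simp [hj0def, hjAdef] at h1
  have h2ne0 : j2 ≠ j0 := by intro h; rw [h] at h2; simp [hj0def, hjAdef] at h2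
  have h2neA : j2 ≠ jA := by intro h; rw [h] at h2; simp [hj0def, hjAdef] at h2
  have hone : (1 : ZMod L) ≠ 0 := one_ne_zero
  have hsne : ∀ s : ZMod L, s = 1 ∨ s = -1 → s ≠ 0 := by
    rintro s (rfl | rfl)
    · exact hone
    · simpa using hone
  -- the two nodes of the odd part of HS
  set wa : TorusV d L := hsNode i {j0} with hwaE
  set wb : TorusV d L := hsNode i {jA} with hwbE
  have hwa0 : wa j0 = i j0 + 1 := by simp [hwaE, hsNode]
  have hwaO : ∀ k, k ≠ j0 → wa k = i k := by
    intro k hk; simp [hwaE, hsNode, hk]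
  have hwbA : wb jA = i jA + 1 := by simp [hwbE, hsNode]
  have hwbO : ∀ k, k ≠ jA → wb k = i k := by
    intro k hk; simp [hwbE, hsNode, hk]
  -- step 1: wa and wb become black
  have hstep1 : ∀ S : Finset (Fin d), S = {j0} ∨ S = {jA} →
      gStep (torusGraph d L) 2 C (hsNode i S) = true := by
    intro S hS
    have hj1S : j1 ∉ S := by rcases hS with rfl | rfl <;> simp [h1ne0, h1neA]
    have hj2S : j2 ∉ S := by rcases hS with rfl | rfl <;> simp [h2ne0, h2neA]
    set w := hsNode i S with hw
    have hwj1 : w j1 = i j1 := by simp [hw, hsNode, hj1S]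
    have hwj2 : w j2 = i j2 := by simp [hw, hsNode, hj2S]
    set u1 : TorusV d L := Function.update w j1 (w j1 + s1) with hu1
    set u2 : TorusV d L := Function.update w j2 (w j2 + s2) with hu2
    have hSJ : S ∈ Finset.filter (fun S => Odd S.card) J.powerset := by
      rw [Finset.mem_filter, Finset.mem_powerset]
      rcases hS with rfl | rfl <;>
        constructor <;> simp [hJeq, Finset.singleton_subset_iff]
    have hb1 : C u1 = true := by
      apply hocc1
      refine Finset.mem_image.mpr ⟨S, hSJ, ?_⟩
      rw [hsNode_update i j1 _ S hj1S, hu1, hwj1]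
    have hb2 : C u2 = true := by
      apply hocc2
      refine Finset.mem_image.mpr ⟨S, hSJ, ?_⟩
      rw [hsNode_update i j2 _ S hj2S, hu2, hwj2]
    have hne : u1 ≠ u2 := by
      intro h
      have := congrFun h j1
      rw [hu1, hu2, Function.update_self, Function.update_of_ne hj] at this
      exact hsne s1 hs1 (by linear_combination this)
    exact twoNbrs _ C w u1 u2 hne (adj_update hL w j1 s1 hs1) (adj_update hL w j2 s2 hs2)
      hb1 hb2
  have hwa1 : gStep (torusGraph d L) 2 C wa = true := hstep1 {j0} (Or.inl rfl)
  have hwb1 : gStep (torusGraph d L) 2 C wb = true := hstep1 {jA} (Or.inr rfl)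
  have hwab : wa ≠ wb := by
    intro h
    have h0 := congrFun h j0
    rw [hwa0, hwbO j0 hj0A] at h0
    exact hone (by linear_combination h0)
  -- step 2
  intro v hv
  rw [show (2 : ℕ) = 1 + 1 from rfl, Function.iterate_add_apply, Function.iterate_one]
  obtain ⟨S, hS, rfl⟩ := Finset.mem_image.mp hv
  rw [Finset.mem_filter, Finset.mem_powerset] at hS
  obtain ⟨hSsub, hSeven⟩ := hS
  have hScard : S.card ≤ 2 := by
    calc S.card ≤ J.card := Finset.card_le_card hSsub
      _ = 2 := by rw [hJeq, Finset.card_pair hj0A]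
  have hS02 : S = ∅ ∨ S = {j0, jA} := by
    rcases hSeven with ⟨m, hm⟩
    interval_cases h : S.card
    · left; exact Finset.card_eq_zero.mp h
    · omega
    · right
      rw [hJeq] at hSsub
      exact Finset.eq_of_subset_of_card_le hSsub (by rw [Finset.card_pair hj0A, h])
  rcases hS02 with rfl | rfl
  · -- v = i
    have hie : hsNode i (∅ : Finset (Fin d)) = i := by funext k; simp [hsNode]
    rw [hie]
    have hwa' : wa = Function.update i j0 (i j0 + 1) := by
      funext k
      by_cases hk : k = j0
      · subst hk; rw [Function.update_self, hwa0]
      · rw [Function.update_of_ne hk, hwaO k hk]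
    have hwb' : wb = Function.update i jA (i jA + 1) := by
      funext k
      by_cases hk : k = jA
      · subst hk; rw [Function.update_self, hwbA]
      · rw [Function.update_of_ne hk, hwbO k hk]
    refine twoNbrs _ _ i wa wb hwab ?_ ?_ hwa1 hwb1
    · rw [hwa']; exact adj_update hL i j0 1 (Or.inl rfl)
    · rw [hwb']; exact adj_update hL i jA 1 (Or.inl rfl)
  · -- v = hsNode i {j0, jA}
    set v := hsNode i {j0, jA} with hvdef
    have hvj0 : v j0 = i j0 + 1 := by simp [hvdef, hsNode]
    have hvjA : v jA = i jA + 1 := by simp [hvdef, hsNode]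
    have hvO : ∀ k, k ≠ j0 → k ≠ jA → v k = i k := by
      intro k hk0 hkA; simp [hvdef, hsNode, hk0, hkA]
    have hwa' : wa = Function.update v jA (v jA + (-1)) := by
      funext k
      by_cases hk : k = jA
      · subst hk
        rw [Function.update_self, hvjA, hwaO jA (Ne.symm hj0A)]
        ring
      · rw [Function.update_of_ne hk]
        by_cases hk0 : k = j0
        · subst hk0; rw [hwa0, hvj0]
        · rw [hwaO k hk0, hvO k hk0 hk]
    have hwb' : wb = Function.update v j0 (v j0 + (-1)) := by
      funext k
      by_cases hk : k = j0
      · subst hk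
        rw [Function.update_self, hvj0, hwbO j0 hj0A]
        ring
      · rw [Function.update_of_ne hk]
        by_cases hkA : k = jA
        · subst hkA; rw [hwbA, hvjA]
        · rw [hwbO k hkA, hvO k hk hkA]
    refine twoNbrs _ _ v wa wb hwab ?_ ?_ hwa1 hwb1
    · rw [hwa']; exact adj_update hL v jA (-1) (Or.inr rfl)
    · rw [hwb']; exact adj_update hL v j0 (-1) (Or.inr rfl)
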